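/- arXiv:2008.13001 — 3 statements merged into one kernel-verified Lean document; each statement's English description precedes it below -/
import Mathlib

section
/- Under the hypotheses of the implicit function theorem with scaled norms (continuous invertibility of A = G_z(z⁰,ε⁰) in both the original norms and equivalent 'scaled' norms ‖·‖_{Z_s}, ‖·‖_{E_s}, together with the vanishing of the scaled difference quotient δ^s_ε(z¹,z⁰) := ‖G(z¹,ε) − G(z⁰,ε) − A(z¹−z⁰)‖_{E_s}/‖z¹−z⁰‖_{Z_s} as z¹ → z⁰ and ε → ε⁰), the solution z*(ε) of G(z*(ε),ε) = 0 satisfies the scaled estimate ‖z*(ε) − z⁰‖_{Z_s} ≤ c ‖ε − ε⁰‖_{E_s} with c = 2‖A^{-1}‖_{L(E_s,Z_s)}. -/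
open Topology Filter


/-- Implicit function theorem with scaled norms: under invertibility of
A = G_z(z⁰,ε⁰) in the original and in equivalent scaled norms NZ, NE, and the
vanishing of the (unscaled and scaled) difference quotients, the solution
z*(ε) of G(z*(ε),ε) = 0 satisfies NZ(z*(ε) − z⁰) ≤ 2‖A⁻¹‖_{L(E_s,Z_s)} NE(ε − ε⁰). -/
theorem stmt4 {Z E : Type*}
    [NormedAddCommGroup Z] [NormedSpace ℝ Z] [CompleteSpace Z]
    [NormedAddCommGroup E] [NormedSpace ℝ E] [CompleteSpace E]
    (F : Z → E) (z0 : Z) (ε0 : E) (hG0 : F z0 - ε0 = 0)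
    (A : Z ≃L[ℝ] E) (hA : HasFDerivAt F (A : Z →L[ℝ] E) z0)
    -- scaled norms on Z and E, equivalent to the original ones
    (NZ : Z → ℝ) (NE : E → ℝ)
    (hNZequiv : ∃ c₁ c₂ : ℝ, 0 < c₁ ∧ 0 < c₂ ∧
      ∀ z : Z, c₁ * ‖z‖ ≤ NZ z ∧ NZ z ≤ c₂ * ‖z‖)
    (hNEequiv : ∃ d₁ d₂ : ℝ, 0 < d₁ ∧ 0 < d₂ ∧
      ∀ e : E, d₁ * ‖e‖ ≤ NE e ∧ NE e ≤ d₂ * ‖e‖)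
    (hNZadd : ∀ z₁ z₂ : Z, NZ (z₁ + z₂) ≤ NZ z₁ + NZ z₂)
    (hNEadd : ∀ e₁ e₂ : E, NE (e₁ + e₂) ≤ NE e₁ + NE e₂)
    -- bound on the inverse of A in the scaled norms: K = ‖A⁻¹‖_{L(E_s,Z_s)}
    (K : ℝ) (hK : 0 ≤ K) (hAinv : ∀ e : E, NZ (A.symm e) ≤ K * NE e)
    -- unscaled difference quotient condition (ii)
    (hii : ∀ η : ℝ, 0 < η → ∃ δ : ℝ, 0 < δ ∧ ∀ z1 z2 : Z, ∀ ε : E,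
      ‖z1 - z0‖ < δ → ‖z2 - z0‖ < δ → ‖ε - ε0‖ < δ →
      ‖(F z1 - ε) - (F z2 - ε) - A (z1 - z2)‖ ≤ η * ‖z1 - z2‖)
    -- scaled difference quotient condition (iii)
    (hiii : ∀ η : ℝ, 0 < η → ∃ δ : ℝ, 0 < δ ∧ ∀ z1 : Z, ∀ ε : E,
      ‖z1 - z0‖ < δ → ‖ε - ε0‖ < δ →
      NE ((F z1 - ε) - (F z0 - ε) - A (z1 - z0)) ≤ η * NZ (z1 - z0)) :
    ∃ rE : ℝ, 0 < rE ∧ ∃ rZ : ℝ, 0 < rZ ∧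
      ∀ ε : E, ‖ε - ε0‖ ≤ rE → ∃ z : Z, ‖z - z0‖ ≤ rZ ∧ F z - ε = 0 ∧
        NZ (z - z0) ≤ (2 * K) * NE (ε - ε0) := by

  obtain ⟨c₁, c₂, hc₁, hc₂, hNZ⟩ := hNZequiv
  obtain ⟨d₁, d₂, hd₁, hd₂, hNE⟩ := hNEequiv
  have hF0 : F z0 = ε0 := by rwa [sub_eq_zero] at hG0
  -- strict differentiability from (ii)
  have hstrict : HasStrictFDerivAt F (A : Z →L[ℝ] E) z0 := by
    refine .of_isLittleO (Asymptotics.isLittleO_iff.2 fun c hc => ?_)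
    obtain ⟨δ, hδ, hδ'⟩ := hii c hc
    have : ∀ᶠ p : Z × Z in 𝓝 (z0, z0), ‖p.1 - z0‖ < δ ∧ ‖p.2 - z0‖ < δ := by
      have h1 : ∀ᶠ z : Z in 𝓝 z0, ‖z - z0‖ < δ := by
        have := Metric.ball_mem_nhds z0 hδ
        filter_upwards [this] with z hz
        simpa [dist_eq_norm] using hz
      rw [nhds_prod_eq]
      exact (h1.prod_mk h1).mono fun p hp => hp
    filter_upwards [this] with p hp
    have := hδ' p.1 p.2 ε0 hp.1 hp.2 (by simp [hδ])
    simpa using this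
  set g := hstrict.localInverse F A z0 with hg
  -- choose η
  set η : ℝ := d₁ / (2 * d₂ * (K + 1)) with hη
  have hηpos : 0 < η := by positivity
  obtain ⟨δ, hδpos, hδ⟩ := hiii η hηpos
  -- eventual properties near ε0
  have hinv : ∀ᶠ ε in 𝓝 ε0, F (g ε) = ε := by
    have := hstrict.eventually_right_inverse (f := F)
    rwa [hF0] at this
  have hcont : ∀ᶠ ε in 𝓝 ε0, ‖g ε - z0‖ < δ := by
    have hc : ContinuousAt g ε0 := by
      have := hstrict.localInverse_continuousAt (f := F)
      rwa [hF0] at this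
    have h0 : g ε0 = z0 := by
      have := hstrict.localInverse_apply_image (f := F)
      rwa [hF0] at this
    have : ∀ᶠ ε in 𝓝 ε0, g ε ∈ Metric.ball z0 δ := by
      apply hc.eventually_mem
      rw [h0]
      exact Metric.ball_mem_nhds z0 hδpos
    filter_upwards [this] with ε hε
    simpa [dist_eq_norm] using hε
  have hnear : ∀ᶠ ε in 𝓝 ε0, ‖ε - ε0‖ < δ := by
    filter_upwards [Metric.ball_mem_nhds ε0 hδpos] with ε hε
    simpa [dist_eq_norm] using hε
  obtain ⟨r, hr, hball⟩ := Metric.eventually_nhds_iff_ball.1 ((hinv.and hcont).and hnear)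
  refine ⟨r / 2, by positivity, δ, hδpos, fun ε hε => ?_⟩
  have hεball : ε ∈ Metric.ball ε0 r := by
    rw [Metric.mem_ball, dist_eq_norm]
    linarith
  obtain ⟨⟨h1, h2⟩, h3⟩ := hball ε hεball
  refine ⟨g ε, le_of_lt h2, by rw [h1, sub_self], ?_⟩
  set z := g ε with hz
  -- the key estimate
  set R : E := (F z - ε) - (F z0 - ε) - A (z - z0) with hR
  have hRle : NE R ≤ η * NZ (z - z0) := hδ z ε h2 h3
  have hReq : R = (ε - ε0) - A (z - z0) := by
    rw [hR, h1, hF0]; abel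
  have hdecomp : z - z0 = A.symm (ε - ε0) + A.symm (-R) := by
    have : A (z - z0) = (ε - ε0) + (-R) := by rw [hReq]; abel
    calc z - z0 = A.symm (A (z - z0)) := by simp
    _ = A.symm ((ε - ε0) + (-R)) := by rw [this]
    _ = A.symm (ε - ε0) + A.symm (-R) := by simp
  have hmain : NZ (z - z0) ≤ K * NE (ε - ε0) + K * NE (-R) := by
    calc NZ (z - z0) = NZ (A.symm (ε - ε0) + A.symm (-R)) := by rw [hdecomp]
    _ ≤ NZ (A.symm (ε - ε0)) + NZ (A.symm (-R)) := hNZadd _ _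
    _ ≤ K * NE (ε - ε0) + K * NE (-R) := add_le_add (hAinv _) (hAinv _)
  have hNEneg : NE (-R) ≤ (d₂ / d₁) * NE R := by
    have h1 := (hNE (-R)).2
    have h2 := (hNE R).1
    rw [norm_neg] at h1
    have hRn : ‖R‖ ≤ NE R / d₁ := by
      rw [le_div_iff₀ hd₁]; linarith
    calc NE (-R) ≤ d₂ * ‖R‖ := h1
    _ ≤ d₂ * (NE R / d₁) := by nlinarith
    _ = (d₂ / d₁) * NE R := by ring
  have hNZnn : 0 ≤ NZ (z - z0) := le_trans (by positivity) (hNZ (z - z0)).1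
  have hNERnn : 0 ≤ NE R := le_trans (by positivity) (hNE R).1
  have hstep : K * NE (-R) ≤ (1 / 2) * NZ (z - z0) := by
    have h1 : NE (-R) ≤ (d₂ / d₁) * (η * NZ (z - z0)) := by
      calc NE (-R) ≤ (d₂ / d₁) * NE R := hNEneg
      _ ≤ (d₂ / d₁) * (η * NZ (z - z0)) := by
          apply mul_le_mul_of_nonneg_left hRle (by positivity)
    have heq : (d₂ / d₁) * η = 1 / (2 * (K + 1)) := by
      rw [hη]; field_simp
    have h2 : K * ((d₂ / d₁) * (η * NZ (z - z0))) ≤ (1 / 2) * NZ (z - z0) := by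
      rw [show (d₂ / d₁) * (η * NZ (z - z0)) = ((d₂/d₁) * η) * NZ (z - z0) by ring, heq]
      have hhalf : K / (2 * (K + 1)) ≤ 1 / 2 := by
        rw [div_le_div_iff₀ (by positivity) (by norm_num)]; nlinarith
      calc K * (1 / (2 * (K + 1)) * NZ (z - z0))
          = (K / (2 * (K + 1))) * NZ (z - z0) := by ring
        _ ≤ (1 / 2) * NZ (z - z0) := mul_le_mul_of_nonneg_right hhalf hNZnn
    have := mul_le_mul_of_nonneg_left h1 hK
    linarith
  linarith
end

section
/- Let W₁, W₂ be real Banach spaces, f : W₁ → W₂ continuous, and 1 ≤ p, q < ∞. If there are constants c₁ ∈ ℝ and c₂ ≥ 0 with ‖f(w)‖_{W₂} ≤ c₁ + c₂ ‖w‖_{W₁}^{p/q} for all w ∈ W₁, then the superposition operator Φ(x)(s) := f(x(s)) maps L_p(S;W₁) into L_q(S;W₂). -/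
open MeasureTheory
open scoped ENNReal

/-- Growth condition implies the superposition operator maps L_p(S;W₁) into L_q(S;W₂). -/
theorem stmt6 {S W₁ W₂ : Type*} [MeasurableSpace S]
    [NormedAddCommGroup W₁] [NormedAddCommGroup W₂]
    (μ : Measure S) [IsFiniteMeasure μ]
    (f : W₁ → W₂) (hf : Continuous f)
    (p q : ℝ≥0∞) (hp1 : 1 ≤ p) (hp : p ≠ ∞) (hq1 : 1 ≤ q) (hq : q ≠ ∞)
    (c₁ c₂ : ℝ) (hc₂ : 0 ≤ c₂)
    (hgrowth : ∀ w : W₁, ‖f w‖ ≤ c₁ + c₂ * ‖w‖ ^ (p.toReal / q.toReal))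
    (x : S → W₁) (hx : MemLp x p μ) :
    MemLp (fun s => f (x s)) q μ := by
  have hp0 : (0:ℝ) < p.toReal := ENNReal.toReal_pos (by positivity) hp
  have hq0 : (0:ℝ) < q.toReal := ENNReal.toReal_pos (by positivity) hq
  set r : ℝ := p.toReal / q.toReal with hr
  have hr0 : 0 < r := div_pos hp0 hq0
  -- the dominating function
  have hmemh : MemLp (fun s => ‖x s‖ ^ r) q μ := by
    refine ⟨((Real.continuous_rpow_const hr0.le).comp_aestronglyMeasurable
      hx.aestronglyMeasurable.norm), ?_⟩
    rw [eLpNorm_norm_rpow x hr0]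
    have hqr : q * ENNReal.ofReal r = p := by
      conv_lhs => rw [← ENNReal.ofReal_toReal hq]
      rw [← ENNReal.ofReal_mul hq0.le, hr, mul_div_cancel₀ _ hq0.ne',
        ENNReal.ofReal_toReal hp]
    rw [hqr]
    exact ENNReal.rpow_lt_top_of_nonneg hr0.le hx.eLpNorm_ne_top
  have hmemg : MemLp (fun s => c₁ + c₂ * ‖x s‖ ^ r) q μ :=
    (memLp_const c₁).add (hmemh.const_mul c₂)
  refine MemLp.of_le hmemg (hf.comp_aestronglyMeasurable hx.aestronglyMeasurable) ?_
  filter_upwards with s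
  calc ‖f (x s)‖ ≤ c₁ + c₂ * ‖x s‖ ^ r := hgrowth (x s)
    _ ≤ ‖c₁ + c₂ * ‖x s‖ ^ r‖ := le_abs_self _
end

section
/- Let H be a Hilbert space, A a (possibly time-dependent) linear operator, and suppose δx, δλ ∈ W([0,T]) satisfy the coupled optimality system: −δλ' = A*δλ − Lδx + l₁, δλ(T) = δλ_T, δx' = Aδx + BQ^{-1}B*δλ + l₂, δx(0) = δx₀, where L = C*C is self-adjoint nonnegative and Q = Q* > 0. Then ‖Cδx‖²_{L_2(0,T;H)} + ‖Q^{-1/2}B*δλ‖²_{L_2(0,T;H)} ≤ |⟨l₁, δx⟩_{L_2(0,T;H)}| + |⟨l₂, δλ⟩_{L_2(0,T;H)}| + |⟨δx₀, δλ(0)⟩_H| + |⟨δλ_T, δx(T)⟩_H|. -/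
open MeasureTheory Set ContinuousLinearMap
open scoped RealInnerProductSpace

/-- Energy estimate for the coupled linear-quadratic optimality system:
if −δλ' = A*δλ − Lδx + l₁ and δx' = Aδx + BQ⁻¹B*δλ + l₂ with L = C*C and
‖Kδλ‖² = ⟨BQ⁻¹B*δλ, δλ⟩ (K playing the role of Q^{-1/2}B*), then
‖Cδx‖²_{L₂} + ‖Q^{-1/2}B*δλ‖²_{L₂} ≤ |⟨l₁,δx⟩| + |⟨l₂,δλ⟩| + |⟨δx₀,δλ(0)⟩| + |⟨δλ_T,δx(T)⟩|. -/
theorem stmt17 {H : Type*} [NormedAddCommGroup H] [InnerProductSpace ℝ H]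
    [CompleteSpace H]
    (T : ℝ) (hT : 0 < T)
    (A B C L Qinv K : H →L[ℝ] H)
    (hL : L = (ContinuousLinearMap.adjoint C).comp C)
    (hQpos : ∀ v : H, 0 ≤ ⟪Qinv v, v⟫)
    (hK : ∀ v : H, ‖K v‖ ^ 2 = ⟪(B.comp (Qinv.comp (ContinuousLinearMap.adjoint B))) v, v⟫)
    (δx dlam l₁ l₂ : ℝ → H)
    (hcx : Continuous δx) (hcl : Continuous dlam)
    (hcl₁ : Continuous l₁) (hcl₂ : Continuous l₂)
    (hadjoint_eq : ∀ t ∈ Icc (0 : ℝ) T,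
      HasDerivAt dlam (-(ContinuousLinearMap.adjoint A) (dlam t) + L (δx t) - l₁ t) t)
    (hstate_eq : ∀ t ∈ Icc (0 : ℝ) T,
      HasDerivAt δx (A (δx t) + (B.comp (Qinv.comp (ContinuousLinearMap.adjoint B))) (dlam t)
        + l₂ t) t) :
    (∫ t in (0 : ℝ)..T, ‖C (δx t)‖ ^ 2) + (∫ t in (0 : ℝ)..T, ‖K (dlam t)‖ ^ 2) ≤
      |∫ t in (0 : ℝ)..T, ⟪l₁ t, δx t⟫| + |∫ t in (0 : ℝ)..T, ⟪l₂ t, dlam t⟫| +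
        |⟪δx 0, dlam 0⟫| + |⟪dlam T, δx T⟫| := by
  set M : H →L[ℝ] H := B.comp (Qinv.comp (ContinuousLinearMap.adjoint B)) with hM
  -- derivative of t ↦ ⟪δx t, dlam t⟫
  have key : ∀ t ∈ uIcc (0 : ℝ) T,
      HasDerivAt (fun t => ⟪δx t, dlam t⟫)
        (‖C (δx t)‖ ^ 2 + ‖K (dlam t)‖ ^ 2 + ⟪l₂ t, dlam t⟫ - ⟪l₁ t, δx t⟫) t := by
    intro t ht
    rw [uIcc_of_le hT.le] at ht
    have h := HasDerivAt.inner ℝ (hstate_eq t ht) (hadjoint_eq t ht)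
    refine h.congr_deriv ?_
    rw [inner_sub_right, inner_add_right, inner_neg_right, inner_add_left, inner_add_left]
    have h1 : ⟪δx t, (ContinuousLinearMap.adjoint A) (dlam t)⟫ = ⟪A (δx t), dlam t⟫ := by
      rw [ContinuousLinearMap.adjoint_inner_right]
    have h2 : ⟪δx t, L (δx t)⟫ = ‖C (δx t)‖ ^ 2 := by
      rw [hL, ContinuousLinearMap.comp_apply, ContinuousLinearMap.adjoint_inner_right,
        real_inner_self_eq_norm_sq]
    have h3 : ⟪M (dlam t), dlam t⟫ = ‖K (dlam t)‖ ^ 2 := (hK (dlam t)).symm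
    rw [h2, h3, h1, real_inner_comm (δx t) (l₁ t)]
    ring
  -- integrability
  have hder_cont : Continuous (fun t =>
      ‖C (δx t)‖ ^ 2 + ‖K (dlam t)‖ ^ 2 + ⟪l₂ t, dlam t⟫ - ⟪l₁ t, δx t⟫) := by
    exact (((((C.continuous.comp hcx).norm.pow 2).add
      ((K.continuous.comp hcl).norm.pow 2)).add (hcl₂.inner hcl)).sub (hcl₁.inner hcx))
  have hint : IntervalIntegrable (fun t =>
      ‖C (δx t)‖ ^ 2 + ‖K (dlam t)‖ ^ 2 + ⟪l₂ t, dlam t⟫ - ⟪l₁ t, δx t⟫)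
      volume 0 T := hder_cont.intervalIntegrable _ _
  have hftc := intervalIntegral.integral_eq_sub_of_hasDerivAt key hint
  have iC : IntervalIntegrable (fun t => ‖C (δx t)‖ ^ 2) volume 0 T := by
    apply Continuous.intervalIntegrable; fun_prop
  have iK : IntervalIntegrable (fun t => ‖K (dlam t)‖ ^ 2) volume 0 T := by
    apply Continuous.intervalIntegrable; fun_prop
  have i2 : IntervalIntegrable (fun t => ⟪l₂ t, dlam t⟫) volume 0 T :=
    (hcl₂.inner hcl).intervalIntegrable _ _
  have i1 : IntervalIntegrable (fun t => ⟪l₁ t, δx t⟫) volume 0 T :=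
    (hcl₁.inner hcx).intervalIntegrable _ _
  rw [intervalIntegral.integral_sub (by exact (iC.add iK).add i2) i1,
    intervalIntegral.integral_add (iC.add iK) i2,
    intervalIntegral.integral_add iC iK] at hftc
  have hkey : (∫ t in (0:ℝ)..T, ‖C (δx t)‖ ^ 2) + (∫ t in (0:ℝ)..T, ‖K (dlam t)‖ ^ 2)
      = ⟪δx T, dlam T⟫ - ⟪δx 0, dlam 0⟫
        - (∫ t in (0:ℝ)..T, ⟪l₂ t, dlam t⟫) + (∫ t in (0:ℝ)..T, ⟪l₁ t, δx t⟫) := by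
    linarith [hftc]
  rw [hkey]
  have hTsym : ⟪δx T, dlam T⟫ = ⟪dlam T, δx T⟫ := real_inner_comm _ _
  rw [hTsym]
  have a1 := le_abs_self (∫ t in (0:ℝ)..T, ⟪l₁ t, δx t⟫)
  have a2 := neg_abs_le (∫ t in (0:ℝ)..T, ⟪l₂ t, dlam t⟫)
  have a3 := neg_abs_le ⟪δx 0, dlam 0⟫
  have a4 := le_abs_self ⟪dlam T, δx T⟫
  linarith
end
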